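/- Let C be a finite-dimensional 𝔽₂-vector space with two exhaustive increasing filtrations F and F' that agree after tensoring with a fixed filtered rank-2 vector space: i.e., (C, F) ⊗ (W, G) and (C', F') ⊗ (W, G) are isomorphic as filtered vector spaces, where W = 𝔽₂² has basis elements in filtration levels 0 and 1. Suppose C and C' are isomorphic graded vector spaces in which the top nonzero graded piece is one-dimensional. Then the filtration level of the top graded generator of C under F equals that of the top graded generator of C' under F'. -/
import Mathlib


/-- Stabilization invariance of the filtration level of the top graded
generator. A finite-dimensional graded filtered 𝔽₂-vector space is modeled by
the multiset of `(degree, filtration level)` pairs of a basis. Tensoring with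
the rank-2 filtered space `W` (basis elements in filtration levels `0` and `1`,
differing by one in grading) sends `M` to `M + M.map (fun p => (p.1+1, p.2+1))`.
If `(C,F) ⊗ W ≅ (C',F') ⊗ W` as graded filtered spaces, `C ≅ C'` as graded
spaces, and the top graded piece (in degree `d`) is one-dimensional, then the
filtration level of the top graded generator of `C` equals that of `C'`. -/
theorem stabilization_top_filtration_level
    (M M' : Multiset (ℤ × ℚ)) (d : ℤ)
    (hdeg : M.map Prod.fst = M'.map Prod.fst)
    (htopM : (M.filter (fun p => p.1 = d)).card = 1)
    (hbdM : ∀ p ∈ M, p.1 ≤ d)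
    (htopM' : (M'.filter (fun p => p.1 = d)).card = 1)
    (hbdM' : ∀ p ∈ M', p.1 ≤ d)
    (htens : M + M.map (fun p => (p.1 + 1, p.2 + 1))
           = M' + M'.map (fun p => (p.1 + 1, p.2 + 1))) :
    ∀ p ∈ M, ∀ p' ∈ M', p.1 = d → p'.1 = d → p.2 = p'.2 := by
  intro p hp p' hp' hpd hp'd
  set f : ℤ × ℚ → ℤ × ℚ := fun q => (q.1 + 1, q.2 + 1) with hf
  have key : ∀ (N : Multiset (ℤ × ℚ)), (∀ q ∈ N, q.1 ≤ d) →
      (N + N.map f).filter (fun q => q.1 = d + 1)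
        = (N.filter (fun q => q.1 = d)).map f := by
    intro N hbd
    rw [Multiset.filter_add]
    have h1 : N.filter (fun q => q.1 = d + 1) = 0 := by
      rw [Multiset.filter_eq_nil]
      intro q hq h
      have := hbd q hq
      omega
    rw [h1, zero_add, Multiset.filter_map]
    congr 1
    apply Multiset.filter_congr
    intro q hq
    simp only [hf, Function.comp_apply]
    constructor <;> intro h <;> omega
  have hMp : M.filter (fun q => q.1 = d) = {p} := by
    have hmem : p ∈ M.filter (fun q => q.1 = d) := Multiset.mem_filter.mpr ⟨hp, hpd⟩
    obtain ⟨a, ha⟩ := Multiset.card_eq_one.mp htopM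
    rw [ha] at hmem ⊢
    simp at hmem
    rw [hmem]
  have hMp' : M'.filter (fun q => q.1 = d) = {p'} := by
    have hmem : p' ∈ M'.filter (fun q => q.1 = d) := Multiset.mem_filter.mpr ⟨hp', hp'd⟩
    obtain ⟨a, ha⟩ := Multiset.card_eq_one.mp htopM'
    rw [ha] at hmem ⊢
    simp at hmem
    rw [hmem]
  have h := key M hbdM
  rw [htens, key M' hbdM', hMp', hMp] at h
  simp only [hf, Multiset.map_singleton, Multiset.singleton_inj, Prod.mk.injEq] at h
  linarith [h.2]
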